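/- Let A ∈ [0,1], p ∈ [0,1], and let ρ_A = [[(1+A)/2, −(i/2)√(1−A²)], [(i/2)√(1−A²), (1−A)/2]]. Let ε_D be the dephasing channel with Kraus operators E₀ = √(1−p/2)·I and E₁ = √(p/2)·diag(1,−1). Then the decay of both the l₁-norm imaginarity measure and the robustness of imaginarity satisfies F_{l₁}(ρ_A) − F_{l₁}(ε_D(ρ_A)) = F_R(ρ_A) − F_R(ε_D(ρ_A)) = p√(1−A²). -/

import Mathlib

open Matrix Kronecker BigOperators
open scoped ComplexOrder

noncomputable section

/-- A density matrix: positive semidefinite with trace 1. -/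
def IsDensityMatrix {n : Type*} [Fintype n] [DecidableEq n] (ρ : Matrix n n ℂ) : Prop :=
  ρ.PosSemidef ∧ ρ.trace = 1

/-- The l₁-norm imaginarity measure: sum of |Im ρᵢⱼ| over off-diagonal entries. -/
noncomputable def Fl1 {n : Type*} [Fintype n] [DecidableEq n] (ρ : Matrix n n ℂ) : ℝ :=
  ∑ i, ∑ j, if i = j then 0 else |(ρ i j).im|

/-- The square root of a positive semidefinite matrix (Mathlib's former `Matrix.PosSemidef.sqrt`,
since removed; restated here with its old definition). -/
noncomputable def Matrix.PosSemidef.sqrt {n : Type*} [Fintype n] [DecidableEq n] {A : Matrix n n ℂ}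
    (hA : A.PosSemidef) : Matrix n n ℂ :=
  (hA.1.eigenvectorUnitary : Matrix n n ℂ) * diagonal ((↑) ∘ (Real.sqrt ·) ∘ hA.1.eigenvalues) *
    (star hA.1.eigenvectorUnitary : Matrix n n ℂ)

/-- The trace norm ‖M‖₁ = Tr √(M†M). -/
noncomputable def traceNorm {n : Type*} [Fintype n] [DecidableEq n] (M : Matrix n n ℂ) : ℝ :=
  ((Matrix.posSemidef_conjTranspose_mul_self M).sqrt.trace).re

/-- The robustness of imaginarity: (1/2)‖ρ − ρᵀ‖₁. -/
noncomputable def FR {n : Type*} [Fintype n] [DecidableEq n] (ρ : Matrix n n ℂ) : ℝ :=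
  traceNorm (ρ - ρᵀ) / 2

/-- Von Neumann entropy (base-2), via eigenvalues of a Hermitian matrix
(junk value 0 if not Hermitian). -/
noncomputable def vnEntropy {n : Type*} [Fintype n] [DecidableEq n] (σ : Matrix n n ℂ) : ℝ :=
  if h : σ.IsHermitian then -∑ j, (h.eigenvalues j) * Real.logb 2 (h.eigenvalues j) else 0

/-- The relative entropy of imaginarity: S(Re ρ) − S(ρ), Re ρ = (ρ + ρᵀ)/2. -/
noncomputable def Fr {n : Type*} [Fintype n] [DecidableEq n] (ρ : Matrix n n ℂ) : ℝ :=
  vnEntropy ((1/2 : ℂ) • (ρ + ρᵀ)) - vnEntropy ρ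

/-- The canonical single-qubit state ρ_A. -/
noncomputable def rhoA (A : ℝ) : Matrix (Fin 2) (Fin 2) ℂ :=
  !![(((1 + A) / 2 : ℝ) : ℂ), -(Complex.I / 2) * (Real.sqrt (1 - A ^ 2) : ℂ);
     (Complex.I / 2) * (Real.sqrt (1 - A ^ 2) : ℂ), (((1 - A) / 2 : ℝ) : ℂ)]

/-- Density matrix of the maximal imaginary state |+⟩ = (|0⟩ + i|1⟩)/√2. -/
noncomputable def Mplus : Matrix (Fin 2) (Fin 2) ℂ :=
  (1/2 : ℂ) • !![1, -Complex.I; Complex.I, 1]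

/-- The dephasing channel. -/
noncomputable def dephasing (p : ℝ) (ρ : Matrix (Fin 2) (Fin 2) ℂ) : Matrix (Fin 2) (Fin 2) ℂ :=
  ((Real.sqrt (1 - p/2) : ℂ) • (1 : Matrix (Fin 2) (Fin 2) ℂ)) * ρ *
    ((Real.sqrt (1 - p/2) : ℂ) • (1 : Matrix (Fin 2) (Fin 2) ℂ))ᴴ +
  ((Real.sqrt (p/2) : ℂ) • !![1, 0; 0, -1]) * ρ * ((Real.sqrt (p/2) : ℂ) • !![1, 0; 0, -1])ᴴ


lemma traceNorm_skew (c : ℝ) (hc : 0 ≤ c) :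
    traceNorm !![0, -(c:ℂ) * Complex.I; (c:ℂ) * Complex.I, 0] = 2 * c := by
  set M : Matrix (Fin 2) (Fin 2) ℂ := !![0, -(c:ℂ) * Complex.I; (c:ℂ) * Complex.I, 0] with hM
  have hpsd : Matrix.PosSemidef ((c:ℂ) • (1 : Matrix (Fin 2) (Fin 2) ℂ)) := by
    have : (c:ℂ) • (1 : Matrix (Fin 2) (Fin 2) ℂ) = Matrix.diagonal (fun _ => (c:ℂ)) := by
      simp [Matrix.smul_one_eq_diagonal]
    rw [this]
    refine Matrix.posSemidef_diagonal_iff.mpr fun i => ?_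
    exact_mod_cast Complex.zero_le_real.mpr hc
  have hsq : ((c:ℂ) • (1 : Matrix (Fin 2) (Fin 2) ℂ)) ^ 2 = Mᴴ * M := by
    ext i j
    fin_cases i <;> fin_cases j <;>
      simp [hM, pow_two, Matrix.mul_apply, Fin.sum_univ_two, Complex.ext_iff] <;> ring
  have h : (c:ℂ) • (1 : Matrix (Fin 2) (Fin 2) ℂ) = (Matrix.posSemidef_conjTranspose_mul_self M).sqrt := by
    have hev : ∀ i, (Matrix.posSemidef_conjTranspose_mul_self M).1.eigenvalues i = c ^ 2 := by
      intro i
      have hmem := (Matrix.posSemidef_conjTranspose_mul_self M).1.eigenvalues_mem_spectrum_real i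
      have halg : Mᴴ * M = algebraMap ℝ (Matrix (Fin 2) (Fin 2) ℂ) (c ^ 2) := by
        rw [← hsq]
        ext i j
        fin_cases i <;> fin_cases j <;> simp [pow_two, Matrix.algebraMap_matrix_apply]
      have hmem' : (Matrix.posSemidef_conjTranspose_mul_self M).1.eigenvalues i ∈
          spectrum ℝ (algebraMap ℝ (Matrix (Fin 2) (Fin 2) ℂ) (c ^ 2)) := halg ▸ hmem
      rw [spectrum.scalar_eq] at hmem'
      exact hmem'
    unfold Matrix.PosSemidef.sqrt
    have hd : diagonal ((↑) ∘ (Real.sqrt ·) ∘ (Matrix.posSemidef_conjTranspose_mul_self M).1.eigenvalues)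
        = (c:ℂ) • (1 : Matrix (Fin 2) (Fin 2) ℂ) := by
      ext i j
      simp [Function.comp_def, hev, Real.sqrt_sq hc, Matrix.diagonal_apply, Matrix.one_apply]
    rw [hd, Matrix.mul_smul, Matrix.mul_one, Matrix.smul_mul,
      Unitary.mul_star_self_of_mem (SetLike.coe_mem _)]
  unfold traceNorm
  rw [← h]
  simp [Matrix.trace, Matrix.diag, Fin.sum_univ_two]
  try ring

lemma sub_transpose_rhoA (A : ℝ) :
    rhoA A - (rhoA A)ᵀ =
    !![0, -(Real.sqrt (1 - A ^ 2) : ℂ) * Complex.I;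
       (Real.sqrt (1 - A ^ 2) : ℂ) * Complex.I, 0] := by
  ext i j
  fin_cases i <;> fin_cases j <;>
    · simp only [Matrix.sub_apply, Matrix.transpose_apply]
      simp [rhoA, Complex.ext_iff] <;> ring

lemma dephasing_rhoA (A p : ℝ) (hp0 : 0 ≤ p) (hp1 : p ≤ 1) :
    dephasing p (rhoA A) =
    !![(((1 + A) / 2 : ℝ) : ℂ),
       ((1 - p : ℝ) : ℂ) * (-(Complex.I / 2) * (Real.sqrt (1 - A ^ 2) : ℂ));
       ((1 - p : ℝ) : ℂ) * ((Complex.I / 2) * (Real.sqrt (1 - A ^ 2) : ℂ)),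
       (((1 - A) / 2 : ℝ) : ℂ)] := by
  have hZ : ((!![1, 0; 0, -1] : Matrix (Fin 2) (Fin 2) ℂ))ᴴ = !![1, 0; 0, -1] := by
    ext i j; fin_cases i <;> fin_cases j <;> simp
  have hstruct : dephasing p (rhoA A) =
      ((1 - p/2 : ℝ) : ℂ) • rhoA A +
      ((p/2 : ℝ) : ℂ) • (!![1, 0; 0, -1] * rhoA A * !![1, 0; 0, -1]) := by
    unfold dephasing
    rw [Matrix.conjTranspose_smul, Matrix.conjTranspose_smul, hZ,
      Matrix.conjTranspose_one]
    simp only [Complex.star_def, Complex.conj_ofReal]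
    simp only [Matrix.smul_mul, Matrix.mul_smul, Matrix.one_mul, Matrix.mul_one,
      smul_smul]
    congr 2
    · norm_cast
      rw [Real.mul_self_sqrt (by linarith)]
    · norm_cast
      rw [Real.mul_self_sqrt (by linarith)]
  have hZρZ : (!![1, 0; 0, -1] : Matrix (Fin 2) (Fin 2) ℂ) * rhoA A * !![1, 0; 0, -1] =
      !![(((1 + A) / 2 : ℝ) : ℂ), (Complex.I / 2) * (Real.sqrt (1 - A ^ 2) : ℂ);
         -(Complex.I / 2) * (Real.sqrt (1 - A ^ 2) : ℂ), (((1 - A) / 2 : ℝ) : ℂ)] := by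
    ext i j
    fin_cases i <;> fin_cases j <;>
      simp [rhoA, Matrix.mul_apply, Fin.sum_univ_two] <;> ring
  rw [hstruct, hZρZ]
  ext i j
  fin_cases i <;> fin_cases j <;>
    · simp only [Matrix.add_apply, Matrix.smul_apply]
      simp [rhoA, Complex.ext_iff] <;> ring

/-- decay of F_{l₁} and F_R under the dephasing channel. -/
theorem decay_dephasing (A p : ℝ) (hA0 : 0 ≤ A) (hA1 : A ≤ 1) (hp0 : 0 ≤ p) (hp1 : p ≤ 1) :
    Fl1 (rhoA A) - Fl1 (dephasing p (rhoA A)) = p * Real.sqrt (1 - A ^ 2) ∧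
    FR (rhoA A) - FR (dephasing p (rhoA A)) = p * Real.sqrt (1 - A ^ 2) := by
  have hs0 : 0 ≤ Real.sqrt (1 - A ^ 2) := Real.sqrt_nonneg _
  set s := Real.sqrt (1 - A ^ 2) with hs
  have hd := dephasing_rhoA A p hp0 hp1
  constructor
  · rw [hd]
    simp [Fl1, rhoA, Fin.sum_univ_two, abs_of_nonneg, hs0, abs_mul,
      abs_of_nonneg (by linarith : (0:ℝ) ≤ 1 - p)]
    ring
  · have h1 : FR (rhoA A) = s := by
      unfold FR
      rw [sub_transpose_rhoA A]
      rw [show (-(s:ℂ) * Complex.I) = -(s:ℂ) * Complex.I from rfl]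
      rw [traceNorm_skew s hs0]; ring
    have h2 : FR (dephasing p (rhoA A)) = (1 - p) * s := by
      unfold FR
      rw [hd]
      have he : (!![(((1 + A) / 2 : ℝ) : ℂ),
       ((1 - p : ℝ) : ℂ) * (-(Complex.I / 2) * (s : ℂ));
       ((1 - p : ℝ) : ℂ) * ((Complex.I / 2) * (s : ℂ)),
       (((1 - A) / 2 : ℝ) : ℂ)] - (!![(((1 + A) / 2 : ℝ) : ℂ),
       ((1 - p : ℝ) : ℂ) * (-(Complex.I / 2) * (s : ℂ));
       ((1 - p : ℝ) : ℂ) * ((Complex.I / 2) * (s : ℂ)),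
       (((1 - A) / 2 : ℝ) : ℂ)])ᵀ) =
       !![0, -(((1 - p) * s : ℝ) : ℂ) * Complex.I;
          (((1 - p) * s : ℝ) : ℂ) * Complex.I, 0] := by
        ext i j
        fin_cases i <;> fin_cases j <;>
          · simp only [Matrix.sub_apply, Matrix.transpose_apply]
            simp [Complex.ext_iff] <;> ring
      rw [he, traceNorm_skew _ (mul_nonneg (by linarith) hs0)]
      ring
    rw [h1, h2]; ring
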